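/- Every slice of the unit ball of Read's space ℛ has diameter at least 2/3; more generally, every nonempty weakly open subset of the unit ball of ℛ has diameter at least 2/3. -/

import Mathlib

open Filter Topology NormedSpace

/-- The sup norm of a real sequence. -/
noncomputable def supNorm (x : ℕ → ℝ) : ℝ := ⨆ k, |x k|

/-- The duality pairing `⟨x, v⟩ = ∑ₖ x k * v k`. -/
noncomputable def pairing (x v : ℕ → ℝ) : ℝ := ∑' k, x k * v k

/-- Read's norm `|||x||| = ‖x‖_∞ + ∑ₙ rₙ |⟨x, vₙ⟩|`. -/
noncomputable def readNorm (r : ℕ → ℝ) (v : ℕ → ℕ → ℝ) (x : ℕ → ℝ) : ℝ :=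
  supNorm x + ∑' n, r n * |pairing x (v n)|

lemma supNorm_le' {x : ℕ → ℝ} {M : ℝ} (hM : 0 ≤ M) (h : ∀ k, |x k| ≤ M) :
    supNorm x ≤ M := Real.iSup_le h hM

lemma abs_le_supNorm {x : ℕ → ℝ} (hb : BddAbove (Set.range fun k => |x k|)) (k : ℕ) :
    |x k| ≤ supNorm x := le_ciSup hb k

lemma summable_mul_abs {x w : ℕ → ℝ} {M : ℝ} (h : ∀ k, |x k| ≤ M)
    (hw : Summable fun k => |w k|) : Summable fun k => |x k * w k| := by
  refine Summable.of_nonneg_of_le (fun k => abs_nonneg _) (fun k => ?_) (hw.mul_left M)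
  rw [abs_mul]
  exact mul_le_mul_of_nonneg_right (h k) (abs_nonneg _)

lemma summable_pairing {x w : ℕ → ℝ} {M : ℝ} (h : ∀ k, |x k| ≤ M)
    (hw : Summable fun k => |w k|) : Summable fun k => x k * w k :=
  (summable_mul_abs h hw).of_abs

lemma abs_pairing_le {x w : ℕ → ℝ} {M : ℝ} (h : ∀ k, |x k| ≤ M)
    (hw : Summable fun k => |w k|) : |pairing x w| ≤ M * ∑' k, |w k| := by
  have h1 := summable_mul_abs h hw
  unfold pairing
  have h1' : Summable fun k => |x k| * |w k| := by simpa [abs_mul] using h1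
  calc |∑' k, x k * w k| ≤ ∑' k, |x k| * |w k| := by
        simpa [Real.norm_eq_abs] using
          norm_tsum_le_tsum_norm (f := fun k => x k * w k) (by simpa only [Real.norm_eq_abs] using h1)
    _ ≤ ∑' k, M * |w k| := Summable.tsum_le_tsum (fun k =>
          mul_le_mul_of_nonneg_right (h k) (abs_nonneg _)) h1' (hw.mul_left M)
    _ = M * ∑' k, |w k| := tsum_mul_left

lemma readNorm_summable {r : ℕ → ℝ} {v : ℕ → ℕ → ℝ} (hrpos : ∀ n, 0 ≤ r n)
    (hrsum : Summable r) (hv1 : ∀ n, Summable fun k => |v n k|) (hv2 : ∀ n, ∑' k, |v n k| = 1)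
    {x : ℕ → ℝ} {M : ℝ} (h : ∀ k, |x k| ≤ M) :
    Summable fun n => r n * |pairing x (v n)| := by
  refine Summable.of_nonneg_of_le (fun n => mul_nonneg (hrpos n) (abs_nonneg _)) (fun n => ?_)
    (hrsum.mul_right M)
  have := abs_pairing_le h (hv1 n)
  rw [hv2 n, mul_one] at this
  exact mul_le_mul_of_nonneg_left this (hrpos n)

lemma readNorm_le_one_add {r : ℕ → ℝ} {v : ℕ → ℕ → ℝ} (hrpos : ∀ n, 0 ≤ r n)
    (hrsum : Summable r) (hv1 : ∀ n, Summable fun k => |v n k|) (hv2 : ∀ n, ∑' k, |v n k| = 1)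
    {x : ℕ → ℝ} (h : ∀ k, |x k| ≤ 1) : readNorm r v x ≤ 1 + ∑' n, r n := by
  unfold readNorm
  refine add_le_add (supNorm_le' one_pos.le h) ?_
  refine Summable.tsum_le_tsum (fun n => ?_) (readNorm_summable hrpos hrsum hv1 hv2 h) hrsum
  have h2 := abs_pairing_le h (hv1 n)
  rw [hv2 n, mul_one] at h2
  calc r n * |pairing x (v n)| ≤ r n * 1 := mul_le_mul_of_nonneg_left h2 (hrpos n)
    _ = r n := mul_one _

/-- Every slice of the unit ball of Read's space `ℛ` has diameter at least `2/3`;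
more generally, every nonempty relatively weakly open subset of the unit ball of `ℛ`
has diameter at least `2/3`.  Read's space is presented as a normed space `X`
linearly isometric, via `e`, to `c₀` with the norm `|||·|||`; the weak topology on
`X` is the topology induced by the natural map from `X` into `(X* → ℝ)` with the
topology of pointwise convergence. -/
theorem read_slices_and_weak_open_subsets_big
    (r : ℕ → ℝ) (hrpos : ∀ n, 0 < r n) (hrsum : Summable r) (hr2 : ∑' n, r n ≤ 2)
    (v : ℕ → ℕ → ℝ) (hv1 : ∀ n, Summable fun k => |v n k|)
    (hv2 : ∀ n, ∑' k, |v n k| = 1)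
    (hdense : ∀ w : ℕ → ℝ, (Summable fun k => |w k|) → ∑' k, |w k| = 1 →
      ∀ ε > 0, ∃ n, ∑' k, |w k - v n k| < ε)
    (X : Type*) [NormedAddCommGroup X] [NormedSpace ℝ X]
    (e : X →ₗ[ℝ] (ℕ → ℝ)) (hinj : Function.Injective e)
    (hc0 : ∀ x, Tendsto (e x) atTop (𝓝 0))
    (hsurj : ∀ f : ℕ → ℝ, Tendsto f atTop (𝓝 0) → ∃ x, e x = f)
    (hnorm : ∀ x, ‖x‖ = readNorm r v (e x)) :
    (∀ f : StrongDual ℝ X, ‖f‖ = 1 → ∀ δ > 0,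
      2 / 3 ≤ Metric.diam {x | x ∈ Metric.closedBall (0 : X) 1 ∧ 1 - δ < f x}) ∧
    (∀ U : Set X,
      @IsOpen X (.induced (fun x => fun g : StrongDual ℝ X => g x) Pi.topologicalSpace) U →
      (U ∩ Metric.closedBall (0 : X) 1).Nonempty →
      2 / 3 ≤ Metric.diam (U ∩ Metric.closedBall (0 : X) 1)) := by
  classical
  have hrpos' : ∀ n, 0 ≤ r n := fun n => (hrpos n).le
  -- the unit vectors
  set dl : ℕ → ℕ → ℝ := fun k j => if j = k then 1 else 0 with hdl_def
  have hdl_abs : ∀ k j, |dl k j| ≤ 1 := by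
    intro k j
    simp only [dl]
    split <;> norm_num
  have hdl_tend : ∀ k, Tendsto (dl k) atTop (𝓝 0) := by
    intro k
    refine tendsto_const_nhds.congr' ?_
    filter_upwards [eventually_gt_atTop k] with j hj
    simp [dl, hj.ne']
  choose u hu using fun k => hsurj (dl k) (hdl_tend k)
  have hvk_le : ∀ n k, |v n k| ≤ 1 := by
    intro n k
    have := Summable.le_tsum (hv1 n) k (fun j _ => abs_nonneg _)
    rwa [hv2 n] at this
  have pairing_dl : ∀ k (w : ℕ → ℝ), pairing (dl k) w = w k := by
    intro k w
    unfold pairing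
    rw [tsum_eq_single k (fun j hj => by simp [dl, hj])]
    simp [dl]
  have supNorm_dl : ∀ k, supNorm (dl k) = 1 := by
    intro k
    refine le_antisymm (supNorm_le' one_pos.le (hdl_abs k)) ?_
    have hb : BddAbove (Set.range fun j => |dl k j|) :=
      ⟨1, by rintro y ⟨j, rfl⟩; exact hdl_abs k j⟩
    have := abs_le_supNorm hb k
    simpa [dl] using this
  have hAsummable : ∀ k, Summable fun n => r n * |v n k| := by
    intro k
    refine Summable.of_nonneg_of_le (fun n => mul_nonneg (hrpos' n) (abs_nonneg _))
      (fun n => ?_) hrsum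
    calc r n * |v n k| ≤ r n * 1 := mul_le_mul_of_nonneg_left (hvk_le n k) (hrpos' n)
      _ = r n := mul_one _
  set A : ℕ → ℝ := fun k => ∑' n, r n * |v n k| with hA_def
  have hA_nonneg : ∀ k, 0 ≤ A k :=
    fun k => tsum_nonneg fun n => mul_nonneg (hrpos' n) (abs_nonneg _)
  have hA_tend : Tendsto A atTop (𝓝 0) := by
    have h := tendsto_tsum_of_dominated_convergence
      (𝓕 := atTop) (f := fun k n => r n * |v n k|) (g := fun _ => (0:ℝ)) (bound := r) hrsum ?_ ?_
    · simpa using h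
    · intro n
      have h1 : Tendsto (fun k => |v n k|) atTop (𝓝 0) := by
        simpa using ((hv1 n).tendsto_atTop_zero)
      simpa using h1.const_mul (r n)
    · filter_upwards with k n
      rw [Real.norm_eq_abs, abs_mul, abs_of_nonneg (hrpos' n), abs_abs]
      calc r n * |v n k| ≤ r n * 1 := mul_le_mul_of_nonneg_left (hvk_le n k) (hrpos' n)
        _ = r n := mul_one _
  have hnorm_u : ∀ k, ‖u k‖ = 1 + A k := by
    intro k
    rw [hnorm, hu k]
    unfold readNorm
    rw [supNorm_dl k]
    congr 1
    exact tsum_congr fun n => by rw [pairing_dl]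
  -- unit vectors are weakly null
  have weak_null : ∀ g : StrongDual ℝ X, Tendsto (fun k => g (u k)) atTop (𝓝 0) := by
    intro g
    have key : ∀ F : Finset ℕ, ∑ k ∈ F, |g (u k)| ≤ ‖g‖ * 3 := by
      intro F
      set σ : ℕ → ℝ := fun k => if 0 ≤ g (u k) then 1 else -1 with hσ
      set s : X := ∑ k ∈ F, σ k • u k with hs
      have hgs : g s = ∑ k ∈ F, |g (u k)| := by
        rw [hs, map_sum]
        refine Finset.sum_congr rfl fun k _ => ?_
        rw [map_smul, smul_eq_mul]
        rcases le_or_gt 0 (g (u k)) with h | h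
        · simp [σ, if_pos h, abs_of_nonneg h]
        · simp [σ, if_neg (not_le.2 h), abs_of_neg h]
      have hes : ∀ j, e s j = ∑ k ∈ F, σ k * dl k j := by
        intro j
        rw [hs, map_sum, Finset.sum_apply]
        refine Finset.sum_congr rfl fun k _ => ?_
        rw [map_smul, hu k]
        rfl
      have habs : ∀ j, |e s j| ≤ 1 := by
        intro j
        rw [hes j]
        have h1 : ∀ k ∈ F, σ k * dl k j = if j = k then σ k else 0 := by
          intro k _
          simp only [dl]
          split <;> ring
        rw [Finset.sum_congr rfl h1, Finset.sum_ite_eq]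
        split
        · simp only [σ]; split <;> norm_num
        · norm_num
      have hs3 : ‖s‖ ≤ 3 := by
        rw [hnorm]
        have := readNorm_le_one_add hrpos' hrsum hv1 hv2 habs
        linarith
      calc ∑ k ∈ F, |g (u k)| = g s := hgs.symm
        _ ≤ |g s| := le_abs_self _
        _ ≤ ‖g‖ * ‖s‖ := by
            have := g.le_opNorm s
            rwa [Real.norm_eq_abs] at this
        _ ≤ ‖g‖ * 3 := mul_le_mul_of_nonneg_left hs3 (norm_nonneg g)
    have hsum : Summable fun k => |g (u k)| := summable_of_sum_le (fun k => abs_nonneg _) key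
    exact hsum.of_abs.tendsto_atTop_zero
  -- main construction
  have main : ∀ x : X, ‖x‖ ≤ 1 → ∀ W : Set (StrongDual ℝ X → ℝ), IsOpen W →
      (fun g : StrongDual ℝ X => g x) ∈ W → ∀ c, c < 2/3 →
      ∃ y z : X, ((fun g : StrongDual ℝ X => g y) ∈ W) ∧ ((fun g : StrongDual ℝ X => g z) ∈ W) ∧
        ‖y‖ ≤ 1 ∧ ‖z‖ ≤ 1 ∧ c < dist y z := by
    intro x hx W hW hxW c hc
    have hbdd : BddAbove (Set.range fun k => |e x k|) := by
      have h1 : Tendsto (fun k => |e x k|) atTop (𝓝 0) := by simpa using (hc0 x).abs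
      exact h1.bddAbove_range
    have hcoord : ∀ k, |e x k| ≤ supNorm (e x) := abs_le_supNorm hbdd
    have hsup0 : 0 ≤ supNorm (e x) := (abs_nonneg _).trans (hcoord 0)
    set S := ∑' n, r n * |pairing (e x) (v n)| with hS_def
    have hS0 : 0 ≤ S := tsum_nonneg fun n => mul_nonneg (hrpos' n) (abs_nonneg _)
    have hSsummable : Summable fun n => r n * |pairing (e x) (v n)| :=
      readNorm_summable hrpos' hrsum hv1 hv2 hcoord
    have hnx : supNorm (e x) + S ≤ 1 := by
      have h1 := hnorm x
      unfold readNorm at h1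
      rw [← hS_def] at h1
      linarith [hx]
    have hS_le : S ≤ 2 * supNorm (e x) := by
      have h1 : ∀ n, r n * |pairing (e x) (v n)| ≤ r n * supNorm (e x) := by
        intro n
        have h2 := abs_pairing_le hcoord (hv1 n)
        rw [hv2 n, mul_one] at h2
        exact mul_le_mul_of_nonneg_left h2 (hrpos' n)
      calc S ≤ ∑' n, r n * supNorm (e x) := Summable.tsum_le_tsum h1 hSsummable (hrsum.mul_right _)
        _ = (∑' n, r n) * supNorm (e x) := tsum_mul_right
        _ ≤ 2 * supNorm (e x) := mul_le_mul_of_nonneg_right hr2 hsup0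
    set t := 1 - S with ht_def
    have ht13 : 1/3 ≤ t := by
      rw [ht_def]
      linarith
    have hsup_t : supNorm (e x) ≤ t := by rw [ht_def]; linarith
    have ht0 : 0 < t := by linarith
    set η : ℕ → ℝ := fun k => |e x k| + t * A k with hη_def
    have hη0 : ∀ k, 0 ≤ η k := fun k => add_nonneg (abs_nonneg _) (mul_nonneg ht0.le (hA_nonneg k))
    have hηpos : ∀ k, (0:ℝ) < 1 + η k := fun k => by linarith [hη0 k]
    have hη_tend : Tendsto η atTop (𝓝 0) := by
      rw [hη_def]
      have h1 : Tendsto (fun k => |e x k|) atTop (𝓝 0) := by simpa using (hc0 x).abs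
      have h2 := hA_tend.const_mul t
      simpa using h1.add h2
    set y : ℝ → ℕ → X := fun s k => (1 + η k)⁻¹ • (x + (s * t) • u k) with hy_def
    have hwc : ∀ (s : ℝ), |s| = 1 → ∀ k j, |e x j + (s * t) * dl k j| ≤ |e x k| + t := by
      intro s hs k j
      by_cases hj : j = k
      · subst hj
        have h1 : dl j j = 1 := by simp [dl]
        rw [h1, mul_one]
        have h2 := abs_add_le (e x j) (s * t)
        rw [abs_mul, hs, one_mul, abs_of_pos ht0] at h2
        exact h2
      · have h0 : dl k j = 0 := by simp [dl, hj]
        rw [h0, mul_zero, add_zero]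
        calc |e x j| ≤ supNorm (e x) := hcoord j
          _ ≤ t := hsup_t
          _ ≤ |e x k| + t := by linarith [abs_nonneg (e x k)]
    have hew : ∀ (s : ℝ) k, (e (x + (s * t) • u k)) = fun j => e x j + (s * t) * dl k j := by
      intro s k
      funext j
      rw [map_add, map_smul, hu k]
      rfl
    have hperturb : ∀ (s : ℝ), |s| = 1 → ∀ k, ‖x + (s * t) • u k‖ ≤ 1 + η k := by
      intro s hs k
      rw [hnorm, hew s k]
      unfold readNorm
      have hsupw : supNorm (fun j => e x j + (s*t) * dl k j) ≤ |e x k| + t :=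
        supNorm_le' (add_nonneg (abs_nonneg _) ht0.le) (hwc s hs k)
      have hpair : ∀ n, pairing (fun j => e x j + (s*t) * dl k j) (v n)
          = pairing (e x) (v n) + (s*t) * v n k := by
        intro n
        have h1 : Summable fun j => e x j * v n j := summable_pairing hcoord (hv1 n)
        have h2 : Summable fun j => ((s*t) * dl k j) * v n j := by
          refine summable_pairing (M := |s*t|) (fun j => ?_) (hv1 n)
          rw [abs_mul]
          calc |s*t| * |dl k j| ≤ |s*t| * 1 :=
                mul_le_mul_of_nonneg_left (hdl_abs k j) (abs_nonneg _)
            _ = |s*t| := mul_one _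
        have h3 : pairing (dl k) (v n) = v n k := pairing_dl k (v n)
        unfold pairing at h3 ⊢
        calc ∑' j, (e x j + (s*t) * dl k j) * v n j
            = ∑' j, (e x j * v n j + ((s*t) * dl k j) * v n j) := by
              congr 1; funext j; ring
          _ = (∑' j, e x j * v n j) + ∑' j, ((s*t) * dl k j) * v n j := Summable.tsum_add h1 h2
          _ = (∑' j, e x j * v n j) + (s*t) * ∑' j, dl k j * v n j := by
              congr 1
              rw [← tsum_mul_left]
              congr 1; funext j; ring
          _ = (∑' j, e x j * v n j) + (s*t) * v n k := by rw [h3]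
      have hsum_w : ∑' n, r n * |pairing (fun j => e x j + (s*t) * dl k j) (v n)|
          ≤ S + t * A k := by
        have hlhs : Summable fun n => r n * |pairing (fun j => e x j + (s*t)*dl k j) (v n)| :=
          readNorm_summable hrpos' hrsum hv1 hv2 (hwc s hs k)
        have hrhs : Summable fun n => r n * |pairing (e x) (v n)| + t * (r n * |v n k|) :=
          hSsummable.add ((hAsummable k).mul_left t)
        have hsummand : ∀ n, r n * |pairing (fun j => e x j + (s*t)*dl k j) (v n)|
            ≤ r n * |pairing (e x) (v n)| + t * (r n * |v n k|) := by
          intro n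
          rw [hpair n]
          have habs2 : |pairing (e x) (v n) + (s*t) * v n k|
              ≤ |pairing (e x) (v n)| + t * |v n k| := by
            refine (abs_add_le _ _).trans ?_
            rw [abs_mul, abs_mul, hs, one_mul, abs_of_pos ht0]
          calc r n * |pairing (e x) (v n) + (s*t) * v n k|
              ≤ r n * (|pairing (e x) (v n)| + t * |v n k|) :=
                mul_le_mul_of_nonneg_left habs2 (hrpos' n)
            _ = r n * |pairing (e x) (v n)| + t * (r n * |v n k|) := by ring
        calc ∑' n, r n * |pairing (fun j => e x j + (s*t)*dl k j) (v n)|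
            ≤ ∑' n, (r n * |pairing (e x) (v n)| + t * (r n * |v n k|)) :=
              Summable.tsum_le_tsum hsummand hlhs hrhs
          _ = S + t * A k := by
              rw [Summable.tsum_add hSsummable ((hAsummable k).mul_left t), tsum_mul_left]
      have hfinal : (|e x k| + t) + (S + t * A k) = 1 + η k := by
        simp only [hη_def]
        rw [ht_def]
        ring
      linarith [add_le_add hsupw hsum_w]
    have hnorm_y : ∀ (s : ℝ), |s| = 1 → ∀ k, ‖y s k‖ ≤ 1 := by
      intro s hs k
      have h1 := hperturb s hs k
      simp only [hy_def]
      rw [norm_smul, Real.norm_eq_abs, abs_of_pos (inv_pos.2 (hηpos k))]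
      calc (1 + η k)⁻¹ * ‖x + (s*t) • u k‖ ≤ (1 + η k)⁻¹ * (1 + η k) :=
            mul_le_mul_of_nonneg_left h1 (inv_nonneg.2 (hηpos k).le)
        _ = 1 := inv_mul_cancel₀ (hηpos k).ne'
    have hdist : ∀ k, (1 + η k)⁻¹ * (2/3) ≤ dist (y 1 k) (y (-1) k) := by
      intro k
      have hdiff : y 1 k - y (-1) k = (1 + η k)⁻¹ • ((2*t) • u k) := by
        simp only [hy_def]
        rw [← smul_sub]
        congr 1
        module
      rw [dist_eq_norm, hdiff, norm_smul, norm_smul, Real.norm_eq_abs, Real.norm_eq_abs,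
        abs_of_pos (inv_pos.2 (hηpos k)), abs_of_pos (by linarith : (0:ℝ) < 2*t)]
      have h1 : 1 ≤ ‖u k‖ := by rw [hnorm_u k]; linarith [hA_nonneg k]
      have h2 : (2:ℝ)/3 ≤ (2*t) * ‖u k‖ := by
        calc (2:ℝ)/3 = (2/3) * 1 := by norm_num
          _ ≤ (2*t) * ‖u k‖ := mul_le_mul (by linarith) h1 one_pos.le (by linarith)
      exact mul_le_mul_of_nonneg_left h2 (inv_nonneg.2 (hηpos k).le)
    have hinv_tend : Tendsto (fun k => (1 + η k)⁻¹) atTop (𝓝 1) := by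
      have h1 : Tendsto (fun k => 1 + η k) atTop (𝓝 (1:ℝ)) := by
        simpa using tendsto_const_nhds.add hη_tend
      have h2 := h1.inv₀ (by norm_num : (1:ℝ) ≠ 0)
      simpa using h2
    have hconv : ∀ s : ℝ, Tendsto (fun k => (fun g : StrongDual ℝ X => g (y s k))) atTop
        (𝓝 (fun g : StrongDual ℝ X => g x)) := by
      intro s
      rw [tendsto_pi_nhds]
      intro g
      have hgy : (fun k => g (y s k)) = fun k => (1 + η k)⁻¹ * (g x + (s*t) * g (u k)) := by
        funext k
        simp only [hy_def]
        rw [map_smul, map_add, map_smul, smul_eq_mul, smul_eq_mul]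
      rw [hgy]
      have h2 : Tendsto (fun k => g x + (s*t) * g (u k)) atTop (𝓝 (g x)) := by
        have h3 := (weak_null g).const_mul (s*t)
        simpa using tendsto_const_nhds.add h3
      simpa using hinv_tend.mul h2
    have hev : ∀ s : ℝ, ∀ᶠ k in atTop, (fun g : StrongDual ℝ X => g (y s k)) ∈ W :=
      fun s => (hconv s).eventually (hW.eventually_mem hxW)
    have hevd : ∀ᶠ k in atTop, c < (1 + η k)⁻¹ * (2/3) := by
      have h1 : Tendsto (fun k => (1 + η k)⁻¹ * (2/3)) atTop (𝓝 (2/3)) := by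
        have h2 := hinv_tend.mul_const ((2:ℝ)/3)
        simpa using h2
      exact h1.eventually (eventually_gt_nhds hc)
    obtain ⟨k, hk1, hk2, hk3⟩ := ((hev 1).and ((hev (-1)).and hevd)).exists
    exact ⟨y 1 k, y (-1) k, hk1, hk2,
      hnorm_y 1 (by norm_num) k, hnorm_y (-1) (by norm_num) k,
      hk3.trans_le (hdist k)⟩
  -- weak-open version
  have main2 : ∀ U : Set X,
      @IsOpen X (.induced (fun x => fun g : StrongDual ℝ X => g x) Pi.topologicalSpace) U →
      (U ∩ Metric.closedBall (0 : X) 1).Nonempty →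
      2 / 3 ≤ Metric.diam (U ∩ Metric.closedBall (0 : X) 1) := by
    rintro U hU ⟨x, hxU, hxB⟩
    obtain ⟨W, hW, rfl⟩ := isOpen_induced_iff.1 hU
    refine le_of_forall_lt fun c hc => ?_
    obtain ⟨y, z, hyW, hzW, hy1, hz1, hcd⟩ :=
      main x (mem_closedBall_zero_iff.1 hxB) W hW hxU c hc
    have hbdd : Bornology.IsBounded
        ((fun x => fun g : StrongDual ℝ X => g x) ⁻¹' W ∩ Metric.closedBall (0:X) 1) :=
      Metric.isBounded_closedBall.subset Set.inter_subset_right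
    exact hcd.trans_le (Metric.dist_le_diam_of_mem hbdd
      ⟨hyW, mem_closedBall_zero_iff.2 hy1⟩ ⟨hzW, mem_closedBall_zero_iff.2 hz1⟩)
  refine ⟨?_, main2⟩
  intro f hf δ hδ
  have hne : ∃ x : X, ‖x‖ ≤ 1 ∧ 1 - δ < f x := by
    have hmin : 0 < min δ 1 := lt_min hδ one_pos
    have hlt : 1 - min δ 1 < ‖f‖ := by rw [hf]; linarith
    obtain ⟨x, hx1, hx2⟩ := f.exists_lt_apply_of_lt_opNorm hlt
    have hminδ : min δ 1 ≤ δ := min_le_left _ _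
    rcases le_or_gt 0 (f x) with h | h
    · refine ⟨x, hx1.le, ?_⟩
      rw [Real.norm_eq_abs, abs_of_nonneg h] at hx2
      linarith
    · refine ⟨-x, by simpa using hx1.le, ?_⟩
      rw [Real.norm_eq_abs, abs_of_neg h] at hx2
      rw [map_neg]
      linarith
  obtain ⟨x₀, hx₀, hfx₀⟩ := hne
  have hUopen : @IsOpen X (.induced (fun x => fun g : StrongDual ℝ X => g x) Pi.topologicalSpace)
      {x : X | 1 - δ < f x} :=
    isOpen_induced_iff.2
      ⟨(fun φ : StrongDual ℝ X → ℝ => φ f) ⁻¹' Set.Ioi (1-δ),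
        (isOpen_Ioi).preimage (continuous_apply f), rfl⟩
  have hset : {x : X | x ∈ Metric.closedBall (0:X) 1 ∧ 1 - δ < f x}
      = {x : X | 1 - δ < f x} ∩ Metric.closedBall (0:X) 1 := by
    ext z
    simp only [Set.mem_setOf_eq, Set.mem_inter_iff]
    tauto
  rw [hset]
  exact main2 _ hUopen ⟨x₀, hfx₀, mem_closedBall_zero_iff.2 hx₀⟩
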